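/- Let k be a field and V₁, V₂, V₃ k-vector spaces. Let f be a linear functional on V₁ ⊗ V₂ ⊗ V₃. If f lies in the image of the canonical map V₁* ⊗ (V₂ ⊗ V₃)* → (V₁ ⊗ V₂ ⊗ V₃)* and also in the image of the canonical map V₂* ⊗ (V₁ ⊗ V₃)* → (V₁ ⊗ V₂ ⊗ V₃)*, then f lies in the image of the canonical map V₁* ⊗ V₂* ⊗ V₃* → (V₁ ⊗ V₂ ⊗ V₃)*. -/
import Mathlib


open TensorProduct

/-- If a functional on `V₁ ⊗ V₂ ⊗ V₃` lies in the image of the canonical map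
`V₁* ⊗ (V₂ ⊗ V₃)* → (V₁ ⊗ V₂ ⊗ V₃)*` and in the image of the canonical map
`V₂* ⊗ (V₁ ⊗ V₃)* → (V₁ ⊗ V₂ ⊗ V₃)*`, then it lies in the image of the canonical map
`V₁* ⊗ V₂* ⊗ V₃* → (V₁ ⊗ V₂ ⊗ V₃)*`. -/
theorem statement9 (k V₁ V₂ V₃ : Type) [Field k]
    [AddCommGroup V₁] [Module k V₁] [AddCommGroup V₂] [Module k V₂]
    [AddCommGroup V₃] [Module k V₃]
    (f : Module.Dual k (V₁ ⊗[k] (V₂ ⊗[k] V₃)))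
    (h₁ : f ∈ LinearMap.range (TensorProduct.dualDistrib k V₁ (V₂ ⊗[k] V₃)))
    (h₂ : f ∈ LinearMap.range
      ((TensorProduct.leftComm k V₁ V₂ V₃).toLinearMap.dualMap ∘ₗ
        TensorProduct.dualDistrib k V₂ (V₁ ⊗[k] V₃))) :
    f ∈ LinearMap.range
      (TensorProduct.dualDistrib k V₁ (V₂ ⊗[k] V₃) ∘ₗ
        TensorProduct.map LinearMap.id (TensorProduct.dualDistrib k V₂ V₃)) := by
  classical
  obtain ⟨t, ht⟩ := h₁
  obtain ⟨u, hu⟩ := h₂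
  set R := LinearMap.range (TensorProduct.dualDistrib k V₂ V₃) with hR
  -- the slice map v ↦ (w ↦ f (v ⊗ w))
  let slice : V₁ →ₗ[k] Module.Dual k (V₂ ⊗[k] V₃) :=
    (LinearMap.llcomp k (V₂ ⊗[k] V₃) (V₁ ⊗[k] (V₂ ⊗[k] V₃)) k f).comp
      (TensorProduct.mk k V₁ (V₂ ⊗[k] V₃))
  have slice_apply : ∀ v w, slice v w = f (v ⊗ₜ w) := fun v w => rfl
  -- every slice lies in R, using h₂
  have key : ∀ (u' : Module.Dual k V₂ ⊗[k] Module.Dual k (V₁ ⊗[k] V₃)) (v : V₁),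
      LinearMap.comp
        ((TensorProduct.leftComm k V₁ V₂ V₃).toLinearMap.dualMap
          (TensorProduct.dualDistrib k V₂ (V₁ ⊗[k] V₃) u'))
        (TensorProduct.mk k V₁ (V₂ ⊗[k] V₃) v) ∈ R := by
    intro u'
    induction u' using TensorProduct.induction_on with
    | zero =>
      intro v
      simp
    | tmul ψ η =>
      intro v
      refine ⟨ψ ⊗ₜ (η.comp (TensorProduct.mk k V₁ V₃ v)), ?_⟩
      apply TensorProduct.ext'
      intro y z
      simp [TensorProduct.dualDistrib_apply, TensorProduct.leftComm_tmul]
    | add a b ha hb =>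
      intro v
      simpa [map_add, LinearMap.add_comp] using R.add_mem (ha v) (hb v)
  rw [LinearMap.comp_apply] at hu
  have slice_mem : ∀ v, slice v ∈ R := by
    intro v
    have h := key u v
    rw [hu] at h
    exact h
  -- slices lie in a finite-dimensional space, using h₁
  obtain ⟨S, hS⟩ := TensorProduct.exists_finset t
  have slice_mem_span : ∀ v, slice v ∈
      Submodule.span k (Prod.snd '' (S : Set (Module.Dual k V₁ × Module.Dual k (V₂ ⊗[k] V₃)))) := by
    intro v
    have : slice v = ∑ p ∈ S, p.1 v • p.2 := by
      refine LinearMap.ext fun w => ?_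
      rw [slice_apply, ← ht, hS]
      simp [TensorProduct.dualDistrib_apply]
    rw [this]
    exact Submodule.sum_mem _ fun p hp => Submodule.smul_mem _ _
      (Submodule.subset_span ⟨p, hp, rfl⟩)
  set W : Submodule k (Module.Dual k (V₂ ⊗[k] V₃)) :=
    Submodule.span k (Set.range slice) with hW
  haveI hWfin : FiniteDimensional k W := by
    have hle : W ≤ Submodule.span k
        (Prod.snd '' (S : Set (Module.Dual k V₁ × Module.Dual k (V₂ ⊗[k] V₃)))) := by
      rw [hW, Submodule.span_le]
      rintro _ ⟨v, rfl⟩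
      exact slice_mem_span v
    have : FiniteDimensional k (Submodule.span k
        (Prod.snd '' (S : Set (Module.Dual k V₁ × Module.Dual k (V₂ ⊗[k] V₃))))) :=
      FiniteDimensional.span_of_finite k ((S.finite_toSet).image _)
    exact Submodule.finiteDimensional_of_le hle
  have hWR : W ≤ R := by
    rw [hW, Submodule.span_le]
    rintro _ ⟨v, rfl⟩
    exact slice_mem v
  -- build the preimage
  let g : V₁ →ₗ[k] W := slice.codRestrict W fun v => Submodule.subset_span ⟨v, rfl⟩
  haveI : Module.Free k W := Module.Free.of_divisionRing k W
  let b := Module.finBasis k W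
  choose c hc using fun i => hWR (b i).2
  refine ⟨∑ i, ((b.coord i).comp g) ⊗ₜ c i, ?_⟩
  apply TensorProduct.ext'
  intro v w
  have hrepr : (∑ i, b.repr (g v) i • (b i : Module.Dual k (V₂ ⊗[k] V₃))) = (g v : Module.Dual k (V₂ ⊗[k] V₃)) := by
    have := b.sum_repr (g v)
    calc (∑ i, b.repr (g v) i • (b i : Module.Dual k (V₂ ⊗[k] V₃)))
        = ((∑ i, b.repr (g v) i • b i : W) : Module.Dual k (V₂ ⊗[k] V₃)) := by
          push_cast [Submodule.coe_sum]; rfl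
      _ = _ := by rw [this]
  calc (TensorProduct.dualDistrib k V₁ (V₂ ⊗[k] V₃) ∘ₗ
        TensorProduct.map LinearMap.id (TensorProduct.dualDistrib k V₂ V₃))
        (∑ i, ((b.coord i).comp g) ⊗ₜ c i) (v ⊗ₜ w)
      = ∑ i, b.repr (g v) i * (b i : Module.Dual k (V₂ ⊗[k] V₃)) w := by
        rw [map_sum, LinearMap.sum_apply]
        refine Finset.sum_congr rfl fun i _ => ?_
        simp [TensorProduct.dualDistrib_apply, hc, Module.Basis.coord_apply]
    _ = (g v : Module.Dual k (V₂ ⊗[k] V₃)) w := by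
        rw [← hrepr]
        simp [LinearMap.sum_apply]
    _ = f (v ⊗ₜ w) := rfl
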